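/- If a positive function f on momenta satisfies f(p1)/(1+f(p1)) = (f(p2)/(1+f(p2)))·(f(p3)/(1+f(p3))) whenever p1 = p2 + p3 and |p1|² = |p2|² + |p3|² + 2mgn_c, then f(p)/(1+f(p)) = exp(-(α(|p|²+2mgn_c) + β·p)) for some constants α > 0 and β ∈ ℝ³; equivalently f is a Planckian f(p) = 1/(exp(α(|p|²+2mgn_c)+β·p) - 1). -/

import Mathlib

open MeasureTheory

noncomputable section

/-- Momentum space ℝ³. -/
abbrev P3 := EuclideanSpace ℝ (Fin 3)

namespace PlanckAux

open Filter

local notation "⟪" x ", " y "⟫" => @inner ℝ _ _ x y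

/-- Additive + continuous on the nonnegative half-line implies linear there. -/
lemma half_additive_linear (e : ℝ → ℝ) (hcont : Continuous e)
    (hadd : ∀ t s : ℝ, 0 ≤ t → 0 ≤ s → e (t + s) = e t + e s) :
    ∀ t : ℝ, 0 ≤ t → e t = t * e 1 := by
  have e0 : e 0 = 0 := by have h := hadd 0 0 le_rfl le_rfl; simp at h; linarith
  have hnat : ∀ (n : ℕ) (t : ℝ), 0 ≤ t → e (n * t) = n * e t := by
    intro n
    induction n with
    | zero => intro t ht; simp [e0]
    | succ n ih =>
      intro t ht
      have : ((n : ℝ) + 1) * t = n * t + t := by ring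
      rw [Nat.cast_succ, this, hadd _ _ (by positivity) ht, ih t ht]
      ring
  have hrat : ∀ (m n : ℕ), 0 < n → e ((m : ℝ) / n) = ((m : ℝ) / n) * e 1 := by
    intro m n hn
    have hn' : (n : ℝ) ≠ 0 := by positivity
    have h1 : e ((n : ℝ) * ((m : ℝ) / n)) = n * e ((m : ℝ) / n) := hnat n _ (by positivity)
    have h2 : (n : ℝ) * ((m : ℝ) / n) = (m : ℝ) := by field_simp
    have h3 : e ((m : ℝ) * 1) = m * e 1 := hnat m 1 zero_le_one
    rw [h2] at h1
    rw [mul_one] at h3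
    rw [h3] at h1
    field_simp at h1 ⊢
    linarith
  intro t ht
  set a : ℕ → ℝ := fun n => (⌊t * n⌋₊ : ℝ) / n with ha
  have hta : Tendsto a atTop (nhds t) := by
    apply tendsto_of_tendsto_of_tendsto_of_le_of_le' (g := fun n : ℕ => t - 1 / n)
      (h := fun _ : ℕ => t)
    · simpa using tendsto_const_nhds.sub (tendsto_one_div_atTop_nhds_zero_nat (𝕜 := ℝ))
    · exact tendsto_const_nhds
    · filter_upwards [eventually_ge_atTop 1] with n hn
      have hn' : (0 : ℝ) < n := by exact_mod_cast hn
      have hfl := Nat.sub_one_lt_floor (t * n)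
      show t - 1 / ↑n ≤ (⌊t * n⌋₊ : ℝ) / n
      have hstep : (t * n - 1) / n ≤ (⌊t * n⌋₊ : ℝ) / n := by
        gcongr
      have heq : t - 1 / ↑n = (t * ↑n - 1) / ↑n := by
        field_simp
      rw [heq]
      exact hstep
    · filter_upwards [eventually_ge_atTop 1] with n hn
      have hn' : (0 : ℝ) < n := by exact_mod_cast hn
      show (⌊t * n⌋₊ : ℝ) / n ≤ t
      rw [div_le_iff₀ hn']
      exact Nat.floor_le (by positivity)
  have h1 : Tendsto (fun n => e (a n)) atTop (nhds (e t)) :=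
    (hcont.continuousAt.tendsto).comp hta
  have h2 : Tendsto (fun n => e (a n)) atTop (nhds (t * e 1)) := by
    have hev : (fun n => e (a n)) =ᶠ[atTop] fun n => a n * e 1 := by
      filter_upwards [eventually_ge_atTop 1] with n hn
      exact hrat _ n (by omega)
    exact Tendsto.congr' hev.symm (hta.mul tendsto_const_nhds)
  exact tendsto_nhds_unique h1 h2

lemma additive_cont_linear (f : ℝ → ℝ) (hcont : Continuous f)
    (hadd : ∀ t s : ℝ, f (t + s) = f t + f s) : ∀ t : ℝ, f t = t * f 1 := by
  have half := half_additive_linear f hcont (fun t s _ _ => hadd t s)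
  have f0 : f 0 = 0 := by have := hadd 0 0; simp at this; linarith
  intro t
  rcases le_or_gt 0 t with h | h
  · exact half t h
  · have h1 : f t + f (-t) = 0 := by rw [← hadd]; simp [f0]
    have h2 : f (-t) = (-t) * f 1 := half (-t) (by linarith)
    linarith [h1, h2]

/-- There is a nonzero vector orthogonal to any two given vectors in ℝ³. -/
lemma exists_orth (a b : P3) : ∃ n : P3, n ≠ 0 ∧ ⟪a, n⟫ = 0 ∧ ⟪b, n⟫ = 0 := by
  let L : P3 →ₗ[ℝ] ℝ × ℝ :=
    { toFun := fun x => (⟪a, x⟫, ⟪b, x⟫)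
      map_add' := by intro x y; simp [inner_add_right]
      map_smul' := by intro r x; simp [inner_smul_right] }
  have hker : LinearMap.ker L ≠ ⊥ := by
    intro hbot
    have hinj : Function.Injective L := LinearMap.ker_eq_bot.mp hbot
    have h1 : Module.finrank ℝ P3 ≤ Module.finrank ℝ (ℝ × ℝ) :=
      LinearMap.finrank_le_finrank_of_injective hinj
    rw [finrank_euclideanSpace_fin] at h1
    rw [Module.finrank_prod, Module.finrank_self] at h1
    omega
  obtain ⟨n, hn, hn0⟩ := (Submodule.ne_bot_iff _).mp hker
  refine ⟨n, hn0, ?_, ?_⟩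
  · have := congrArg Prod.fst (LinearMap.mem_ker.mp hn)
    simpa [L] using this
  · have := congrArg Prod.snd (LinearMap.mem_ker.mp hn)
    simpa [L] using this

/-- Three pairwise-orthogonal nonzero vectors in ℝ³: anything orthogonal to all
three is zero. -/
lemma orth_triple (a b d : P3) (ha : a ≠ 0) (hb : b ≠ 0) (hd : d ≠ 0)
    (hab : ⟪a, b⟫ = 0) (had : ⟪a, d⟫ = 0) (hbd : ⟪b, d⟫ = 0) :
    ∀ x : P3, ⟪a, x⟫ = 0 → ⟪b, x⟫ = 0 → ⟪d, x⟫ = 0 → x = 0 := by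
  let L : P3 →ₗ[ℝ] ℝ × ℝ × ℝ :=
    { toFun := fun x => (⟪a, x⟫, ⟪b, x⟫, ⟪d, x⟫)
      map_add' := by intro x y; simp [inner_add_right]
      map_smul' := by intro r x; simp [inner_smul_right] }
  have hsurj : Function.Surjective L := by
    rintro ⟨y1, y2, y3⟩
    refine ⟨(y1 / ⟪a,a⟫) • a + (y2 / ⟪b,b⟫) • b + (y3 / ⟪d,d⟫) • d, ?_⟩
    have ha' : ⟪a,a⟫ ≠ 0 := fun h => ha (inner_self_eq_zero.mp h)
    have hb' : ⟪b,b⟫ ≠ 0 := fun h => hb (inner_self_eq_zero.mp h)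
    have hd' : ⟪d,d⟫ ≠ 0 := fun h => hd (inner_self_eq_zero.mp h)
    have hba : ⟪b, a⟫ = 0 := by rw [real_inner_comm]; exact hab
    have hda : ⟪d, a⟫ = 0 := by rw [real_inner_comm]; exact had
    have hdb : ⟪d, b⟫ = 0 := by rw [real_inner_comm]; exact hbd
    show (_, _, _) = (y1, y2, y3)
    simp only [inner_add_right, inner_smul_right, hab, had, hbd, hba, hda, hdb,
      mul_zero, add_zero, zero_add]
    rw [Prod.mk.injEq, Prod.mk.injEq]
    exact ⟨div_mul_cancel₀ y1 ha', div_mul_cancel₀ y2 hb', div_mul_cancel₀ y3 hd'⟩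
  have hrange : LinearMap.range L = ⊤ := LinearMap.range_eq_top.mpr hsurj
  have hrk := LinearMap.finrank_range_add_finrank_ker L
  rw [hrange, finrank_top, finrank_euclideanSpace_fin] at hrk
  have h3 : Module.finrank ℝ (ℝ × ℝ × ℝ) = 3 := by
    rw [Module.finrank_prod, Module.finrank_prod, Module.finrank_self]
  rw [h3] at hrk
  have hker : LinearMap.ker L = ⊥ := Submodule.finrank_eq_zero.mp (by omega)
  intro x h1 h2 h3'
  have hx : L x = 0 := by
    show (_, _, _) = (0 : ℝ × ℝ × ℝ)
    simp [h1, h2, h3']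
  exact (LinearMap.ker_eq_bot.mp hker) (by simpa using hx)


lemma icomm (x y : P3) : ⟪x, y⟫ = ⟪y, x⟫ := real_inner_comm y x

lemma ipos (x : P3) (hx : x ≠ 0) : 0 < ⟪x, x⟫ :=
  lt_of_le_of_ne real_inner_self_nonneg fun h => hx (inner_self_eq_zero.mp h.symm)

lemma sqinner (t : ℝ) (x : P3) : ⟪t • x, t • x⟫ = t * t * ⟪x, x⟫ := by
  rw [real_inner_smul_left, real_inner_smul_right]; ring

section FE

variable {c : ℝ} {G : P3 → ℝ}

/-- The additivity defect. -/
def A (G : P3 → ℝ) (x y : P3) : ℝ := G (x + y) - G x - G y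

lemma L1 (hG : ∀ p q : P3, ⟪p, q⟫ = c → G (p + q) = G p + G q)
    (p q r1 r2 : P3) (hpq : ⟪p, q⟫ = 0)
    (h1 : ⟪p + q, r1⟫ = c) (h2 : ⟪p + q, r2⟫ = c)
    (hr : ⟪r1, r2⟫ = 0) (hpr : ⟪p, r1 + r2⟫ = c) :
    A G p q = A G r1 r2 := by
  have h1' : ⟪p, r1⟫ + ⟪q, r1⟫ = c := by rw [← inner_add_left]; exact h1
  have h2' : ⟪p, r2⟫ + ⟪q, r2⟫ = c := by rw [← inner_add_left]; exact h2
  have hpr' : ⟪p, r1⟫ + ⟪p, r2⟫ = c := by rw [← inner_add_right]; exact hpr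
  have hq : ⟪p + (r1 + r2), q⟫ = c := by
    simp only [inner_add_left]
    rw [hpq, icomm r1 q, icomm r2 q]
    linarith
  have eA : G (p + (r1 + r2)) = G p + G (r1 + r2) := hG _ _ hpr
  have eB : G (p + (r1 + r2) + q) = G (p + (r1 + r2)) + G q := hG _ _ hq
  have eC : G ((p + q) + r1) = G (p + q) + G r1 := hG _ _ h1
  have eD : G ((p + q) + r1 + r2) = G ((p + q) + r1) + G r2 := by
    refine hG _ _ ?_
    rw [inner_add_left, h2, hr, add_zero]
  have key : (p + q) + r1 + r2 = p + (r1 + r2) + q := by abel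
  rw [key] at eD
  unfold A
  linarith

lemma DC (hG : ∀ p q : P3, ⟪p, q⟫ = c → G (p + q) = G p + G q)
    (s w v j : P3) (hs : s ≠ 0)
    (hw : ⟪w, w⟫ = ⟪s, s⟫ / 4) (hv : ⟪v, v⟫ = ⟪s, s⟫ / 4)
    (hsv : ⟪s, v⟫ = 0) (hj : j ≠ 0) (hsj : ⟪s, j⟫ = 0) (hvj : ⟪v, j⟫ = 0)
    (hjw : ⟪j, w⟫ ≠ 0) :
    A G ((1/2 : ℝ) • s + w) ((1/2 : ℝ) • s - w)
      = A G ((1/2 : ℝ) • s + v) ((1/2 : ℝ) • s - v) := by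
  have hss : ⟪s, s⟫ ≠ 0 := fun h => hs (inner_self_eq_zero.mp h)
  have hv0 : v ≠ 0 := by
    intro h
    rw [h, inner_zero_left] at hv
    exact hss (by linarith)
  have hvv : ⟪v, v⟫ ≠ 0 := fun h => hv0 (inner_self_eq_zero.mp h)
  set m : P3 := w - (⟪v, w⟫ / ⟪v, v⟫) • v with hm_def
  have hvm : ⟪v, m⟫ = 0 := by
    rw [hm_def, inner_sub_right, real_inner_smul_right, div_mul_cancel₀ _ hvv,
      sub_self]
  have hjv : ⟪j, v⟫ = 0 := by rw [icomm]; exact hvj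
  have hjm : ⟪j, m⟫ = ⟪j, w⟫ := by
    rw [hm_def, inner_sub_right, real_inner_smul_right, hjv]
    ring
  have hm0 : m ≠ 0 := by
    intro h
    rw [h, inner_zero_right] at hjm
    exact hjw hjm.symm
  have hmm : ⟪m, m⟫ ≠ 0 := fun h => hm0 (inner_self_eq_zero.mp h)
  set k : P3 := s - (⟪m, s⟫ / ⟪m, m⟫) • m with hk_def
  have hmk : ⟪m, k⟫ = 0 := by
    rw [hk_def, inner_sub_right, real_inner_smul_right, div_mul_cancel₀ _ hmm,
      sub_self]
  have hvs : ⟪v, s⟫ = 0 := by rw [icomm]; exact hsv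
  have hvk : ⟪v, k⟫ = 0 := by
    rw [hk_def, inner_sub_right, real_inner_smul_right, hvs, hvm]
    ring
  have hwm : w = m + (⟪v, w⟫ / ⟪v, v⟫) • v := by rw [hm_def]; abel
  have hwk : ⟪w, k⟫ = 0 := by
    calc ⟪w, k⟫ = ⟪m + (⟪v, w⟫ / ⟪v, v⟫) • v, k⟫ := by rw [← hwm]
      _ = ⟪m, k⟫ + (⟪v, w⟫ / ⟪v, v⟫) * ⟪v, k⟫ := by
          rw [inner_add_left, real_inner_smul_left]
      _ = 0 := by rw [hmk, hvk]; ring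
  have hsk : ⟪s, k⟫ = ⟪k, k⟫ := by
    have hs_eq : s = k + (⟪m, s⟫ / ⟪m, m⟫) • m := by rw [hk_def]; abel
    calc ⟪s, k⟫ = ⟪k + (⟪m, s⟫ / ⟪m, m⟫) • m, k⟫ := by rw [← hs_eq]
      _ = ⟪k, k⟫ + (⟪m, s⟫ / ⟪m, m⟫) * ⟪m, k⟫ := by
          rw [inner_add_left, real_inner_smul_left]
      _ = ⟪k, k⟫ := by rw [hmk]; ring
  have hjs : ⟪j, s⟫ = 0 := by rw [icomm]; exact hsj
  have hk0 : k ≠ 0 := by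
    intro h
    have hs_eq : s = (⟪m, s⟫ / ⟪m, m⟫) • m := by
      have h2 : s = k + (⟪m, s⟫ / ⟪m, m⟫) • m := by rw [hk_def]; abel
      rw [h, zero_add] at h2
      exact h2
    have h1 : (0:ℝ) = (⟪m, s⟫ / ⟪m, m⟫) * ⟪j, w⟫ := by
      rw [← hjm, ← real_inner_smul_right, ← hs_eq, hjs]
    rcases mul_eq_zero.mp h1.symm with h3 | h3
    · rw [h3, zero_smul] at hs_eq
      exact hs hs_eq
    · exact hjw h3
  have hsk0 : ⟪s, k⟫ ≠ 0 := by
    rw [hsk]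
    exact fun h => hk0 (inner_self_eq_zero.mp h)
  set r : P3 := (2 * c / ⟪s, k⟫) • k with hr_def
  have hsr : ⟪s, r⟫ = 2 * c := by
    rw [hr_def, real_inner_smul_right, div_mul_cancel₀ _ hsk0]
  have hwr : ⟪w, r⟫ = 0 := by rw [hr_def, real_inner_smul_right, hwk]; ring
  have hvr : ⟪v, r⟫ = 0 := by rw [hr_def, real_inner_smul_right, hvk]; ring
  obtain ⟨n', hn'0, hsn', -⟩ := exists_orth s s
  have hn'n' : (0:ℝ) < ⟪n', n'⟫ := ipos n' hn'0
  have hrrnn : (0:ℝ) ≤ ⟪r, r⟫ / (4 * ⟪n', n'⟫) := by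
    apply div_nonneg real_inner_self_nonneg
    linarith
  set w0 : P3 := Real.sqrt (⟪r, r⟫ / (4 * ⟪n', n'⟫)) • n' with hw0_def
  have harith : ∀ x y : ℝ, y ≠ 0 → x / (4 * y) * y = x / 4 := by
    intro x y hy; field_simp
  have hw0w0 : ⟪w0, w0⟫ = ⟪r, r⟫ / 4 := by
    rw [hw0_def, sqinner, Real.mul_self_sqrt hrrnn]
    exact harith _ _ (ne_of_gt hn'n')
  have hsw0 : ⟪s, w0⟫ = 0 := by rw [hw0_def, real_inner_smul_right, hsn']; ring
  set r1 : P3 := (1/2 : ℝ) • r + w0 with hr1_def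
  set r2 : P3 := (1/2 : ℝ) • r - w0 with hr2_def
  have hsr1 : ⟪s, r1⟫ = c := by
    rw [hr1_def, inner_add_right, real_inner_smul_right, hsr, hsw0]
    ring
  have hsr2 : ⟪s, r2⟫ = c := by
    rw [hr2_def, inner_sub_right, real_inner_smul_right, hsr, hsw0]
    ring
  have hr1r2 : ⟪r1, r2⟫ = 0 := by
    rw [hr1_def, hr2_def]
    simp only [inner_add_left, inner_sub_right, real_inner_smul_left,
      real_inner_smul_right]
    rw [icomm w0 r, hw0w0]
    ring
  have hrsum : r1 + r2 = r := by rw [hr1_def, hr2_def]; module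
  have orth_pair : ∀ u : P3, ⟪u, u⟫ = ⟪s, s⟫ / 4 →
      ⟪(1/2 : ℝ) • s + u, (1/2 : ℝ) • s - u⟫ = 0 := by
    intro u hu
    simp only [inner_add_left, inner_sub_right, real_inner_smul_left,
      real_inner_smul_right]
    rw [icomm u s, hu]
    ring
  have hA1 : A G ((1/2 : ℝ) • s + w) ((1/2 : ℝ) • s - w) = A G r1 r2 := by
    have hsum : ((1/2 : ℝ) • s + w) + ((1/2 : ℝ) • s - w) = s := by module
    apply L1 hG _ _ _ _ (orth_pair w hw) (by rw [hsum]; exact hsr1)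
      (by rw [hsum]; exact hsr2) hr1r2 ?_
    rw [hrsum, inner_add_left, real_inner_smul_left, hsr, hwr]
    ring
  have hA2 : A G ((1/2 : ℝ) • s + v) ((1/2 : ℝ) • s - v) = A G r1 r2 := by
    have hsum : ((1/2 : ℝ) • s + v) + ((1/2 : ℝ) • s - v) = s := by module
    apply L1 hG _ _ _ _ (orth_pair v hv) (by rw [hsum]; exact hsr1)
      (by rw [hsum]; exact hsr2) hr1r2 ?_
    rw [hrsum, inner_add_left, real_inner_smul_left, hsr, hvr]
    ring
  rw [hA1, hA2]

lemma inner_sum_self (x y : P3) : ⟪x + y, x + y⟫ = ⟪x, x⟫ + 2 * ⟪x, y⟫ + ⟪y, y⟫ := by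
  simp only [inner_add_left, inner_add_right]
  rw [icomm y x]
  ring

lemma sum_inner_pos (p q : P3) (hp : p ≠ 0) (hq : q ≠ 0) (hpq : ⟪p, q⟫ = 0) :
    0 < ⟪p + q, p + q⟫ := by
  rw [inner_sum_self, hpq]
  have h1 := ipos p hp
  have h2 := ipos q hq
  linarith

lemma harith (x y : ℝ) (hy : y ≠ 0) : x / (4 * y) * y = x / 4 := by
  field_simp

lemma WD (hG : ∀ p q : P3, ⟪p, q⟫ = c → G (p + q) = G p + G q)
    (s w wt : P3) (hs : s ≠ 0)
    (hw : ⟪w, w⟫ = ⟪s, s⟫ / 4) (hwt : ⟪wt, wt⟫ = ⟪s, s⟫ / 4)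
    (hwpar : ∀ l : ℝ, w ≠ l • s) (hwtpar : ∀ l : ℝ, wt ≠ l • s) :
    A G ((1/2 : ℝ) • s + w) ((1/2 : ℝ) • s - w)
      = A G ((1/2 : ℝ) • s + wt) ((1/2 : ℝ) • s - wt) := by
  have hss : ⟪s, s⟫ ≠ 0 := fun h => hs (inner_self_eq_zero.mp h)
  obtain ⟨n, hn0, hsn, hwn⟩ := exists_orth s w
  obtain ⟨j0, hj00, hsj0, hnj0⟩ := exists_orth s n
  have hchar : ∀ x : P3, ⟪n, x⟫ = 0 → ⟪j0, x⟫ = 0 → x = (⟪s, x⟫ / ⟪s, s⟫) • s := by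
    intro x hnx hjx
    have h0 : x - (⟪s, x⟫ / ⟪s, s⟫) • s = 0 := by
      apply orth_triple s n j0 hs hn0 hj00 hsn hsj0 hnj0
      · rw [inner_sub_right, real_inner_smul_right, div_mul_cancel₀ _ hss, sub_self]
      · rw [inner_sub_right, real_inner_smul_right, icomm n s, hsn, hnx]
        ring
      · rw [inner_sub_right, real_inner_smul_right, icomm j0 s, hsj0, hjx]
        ring
    have := sub_eq_zero.mp h0
    exact this
  have hj0w : ⟪j0, w⟫ ≠ 0 := by
    intro h
    exact hwpar _ (hchar w (by rw [icomm]; exact hwn) h)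
  have key : ∀ u j : P3, u ≠ 0 → ⟪s, u⟫ = 0 → j ≠ 0 → ⟪s, j⟫ = 0 → ⟪u, j⟫ = 0 →
      ⟪j, w⟫ ≠ 0 → ⟪j, wt⟫ ≠ 0 →
      A G ((1/2 : ℝ) • s + w) ((1/2 : ℝ) • s - w)
        = A G ((1/2 : ℝ) • s + wt) ((1/2 : ℝ) • s - wt) := by
    intro u j hu0 hsu hj0' hsj huj hjw hjwt
    have huu : (0:ℝ) < ⟪u, u⟫ := ipos u hu0
    have hq : (0:ℝ) ≤ ⟪s, s⟫ / (4 * ⟪u, u⟫) :=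
      div_nonneg real_inner_self_nonneg (by linarith)
    set v : P3 := Real.sqrt (⟪s, s⟫ / (4 * ⟪u, u⟫)) • u with hv_def
    have hvv : ⟪v, v⟫ = ⟪s, s⟫ / 4 := by
      rw [hv_def, sqinner, Real.mul_self_sqrt hq]
      exact harith _ _ (ne_of_gt huu)
    have hsv : ⟪s, v⟫ = 0 := by rw [hv_def, real_inner_smul_right, hsu]; ring
    have hvj : ⟪v, j⟫ = 0 := by rw [hv_def, real_inner_smul_left, huj]; ring
    have e1 := DC hG s w v j hs hw hvv hsv hj0' hsj hvj hjw
    have e2 := DC hG s wt v j hs hwt hvv hsv hj0' hsj hvj hjwt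
    rw [e1, e2]
  have hnn : (0:ℝ) < ⟪n, n⟫ := ipos n hn0
  have hjj : (0:ℝ) < ⟪j0, j0⟫ := ipos j0 hj00
  have hnw : ⟪n, w⟫ = 0 := by rw [icomm]; exact hwn
  have hj0n : ⟪j0, n⟫ = 0 := by rw [icomm]; exact hnj0
  have hnj : (0:ℝ) < ‖n‖ := norm_pos_iff.mpr hn0
  have hjn : (0:ℝ) < ‖j0‖ := norm_pos_iff.mpr hj00
  set cp : P3 := ‖j0‖ • n + ‖n‖ • j0 with hcp_def
  set cm : P3 := ‖j0‖ • n - ‖n‖ • j0 with hcm_def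
  have hscp : ⟪s, cp⟫ = 0 := by
    rw [hcp_def, inner_add_right, real_inner_smul_right, real_inner_smul_right,
      hsn, hsj0]
    ring
  have hscm : ⟪s, cm⟫ = 0 := by
    rw [hcm_def, inner_sub_right, real_inner_smul_right, real_inner_smul_right,
      hsn, hsj0]
    ring
  have hcpcm : ⟪cp, cm⟫ = 0 := by
    rw [hcp_def, hcm_def]
    simp only [inner_add_left, inner_sub_right, real_inner_smul_left,
      real_inner_smul_right]
    rw [hnj0, hj0n, real_inner_self_eq_norm_sq n, real_inner_self_eq_norm_sq j0]
    ring
  have hncp : ⟪n, cp⟫ = ‖j0‖ * ⟪n, n⟫ := by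
    rw [hcp_def, inner_add_right, real_inner_smul_right, real_inner_smul_right,
      hnj0]
    ring
  have hncm : ⟪n, cm⟫ = ‖j0‖ * ⟪n, n⟫ := by
    rw [hcm_def, inner_sub_right, real_inner_smul_right, real_inner_smul_right,
      hnj0]
    ring
  have hcp0 : cp ≠ 0 := by
    intro h
    rw [h, inner_zero_right] at hncp
    nlinarith
  have hcm0 : cm ≠ 0 := by
    intro h
    rw [h, inner_zero_right] at hncm
    nlinarith
  have hcmw : ⟪cm, w⟫ = -(‖n‖ * ⟪j0, w⟫) := by
    rw [hcm_def, inner_sub_left, real_inner_smul_left, real_inner_smul_left, hnw]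
    ring
  have hcpw : ⟪cp, w⟫ = ‖n‖ * ⟪j0, w⟫ := by
    rw [hcp_def, inner_add_left, real_inner_smul_left, real_inner_smul_left, hnw]
    ring
  by_cases h1 : ⟪j0, wt⟫ ≠ 0
  · exact key n j0 hn0 hsn hj00 hsj0 hnj0 hj0w h1
  by_cases h2 : ⟪cm, wt⟫ ≠ 0
  · refine key cp cm hcp0 hscp hcm0 hscm hcpcm ?_ h2
    rw [hcmw]
    intro h
    rcases mul_eq_zero.mp (neg_eq_zero.mp h) with h'' | h''
    · exact (ne_of_gt hnj) h''
    · exact hj0w h''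
  by_cases h3 : ⟪cp, wt⟫ ≠ 0
  · refine key cm cp hcm0 hscm hcp0 hscp (by rw [icomm]; exact hcpcm) ?_ h3
    rw [hcpw]
    intro h
    rcases mul_eq_zero.mp h with h'' | h''
    · exact (ne_of_gt hnj) h''
    · exact hj0w h''
  · exfalso
    push_neg at h1 h2 h3
    have hcpwt : ⟪cp, wt⟫ = ‖j0‖ * ⟪n, wt⟫ + ‖n‖ * ⟪j0, wt⟫ := by
      rw [hcp_def, inner_add_left, real_inner_smul_left, real_inner_smul_left]
    have hnwt : ⟪n, wt⟫ = 0 := by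
      rw [h1] at hcpwt
      rw [h3] at hcpwt
      have hj' : ‖j0‖ ≠ 0 := ne_of_gt hjn
      have : ‖j0‖ * ⟪n, wt⟫ = 0 := by linarith
      rcases mul_eq_zero.mp this with h | h
      · exact absurd h hj'
      · exact h
    exact hwtpar _ (hchar wt hnwt h1)

set_option maxHeartbeats 2000000 in
lemma main1 (hc : c ≠ 0)
    (hG : ∀ p q : P3, ⟪p, q⟫ = c → G (p + q) = G p + G q)
    (p q p' q' : P3) (hp : p ≠ 0) (hq : q ≠ 0) (hp' : p' ≠ 0) (hq' : q' ≠ 0)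
    (hpq : ⟪p, q⟫ = 0) (hpq' : ⟪p', q'⟫ = 0)
    (hind : ∀ l : ℝ, p' + q' ≠ l • (p + q)) :
    A G p q = A G p' q' := by
  set s : P3 := p + q with hs_def
  set s' : P3 := p' + q' with hs'_def
  have hss : (0:ℝ) < ⟪s, s⟫ := sum_inner_pos p q hp hq hpq
  have hs's' : (0:ℝ) < ⟪s', s'⟫ := sum_inner_pos p' q' hp' hq' hpq'
  have hs : s ≠ 0 := by
    intro h
    rw [h, inner_zero_left] at hss
    exact lt_irrefl 0 hss
  have hs' : s' ≠ 0 := by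
    intro h
    rw [h, inner_zero_left] at hs's'
    exact lt_irrefl 0 hs's'
  -- the decomposition parameter of (p,q)
  set w : P3 := (1/2 : ℝ) • p - (1/2 : ℝ) • q with hw_def
  have hpw : p = (1/2 : ℝ) • s + w := by rw [hw_def, hs_def]; module
  have hqw : q = (1/2 : ℝ) • s - w := by rw [hw_def, hs_def]; module
  have hww : ⟪w, w⟫ = ⟪s, s⟫ / 4 := by
    rw [hw_def, hs_def]
    simp only [inner_sub_left, inner_sub_right, inner_add_left, inner_add_right,
      real_inner_smul_left, real_inner_smul_right]
    linarith [hpq, icomm q p]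
  have hwpar : ∀ l : ℝ, w ≠ l • s := by
    intro l hl
    have hp_eq : p = (l + 1/2) • s := by rw [hpw, hl]; module
    have hq_eq : q = (1/2 - l) • s := by rw [hqw, hl]; module
    have hz : (0:ℝ) = (l + 1/2) * ((1/2 - l) * ⟪s, s⟫) := by
      rw [← hpq, hp_eq, hq_eq, real_inner_smul_left, real_inner_smul_right]
    rcases mul_eq_zero.mp hz.symm with h | h
    · rw [h, zero_smul] at hp_eq
      exact hp hp_eq
    · rcases mul_eq_zero.mp h with h' | h'
      · rw [h', zero_smul] at hq_eq
        exact hq hq_eq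
      · exact (ne_of_gt hss) h'
  -- decomposition parameter of (p',q')
  set w' : P3 := (1/2 : ℝ) • p' - (1/2 : ℝ) • q' with hw'_def
  have hpw' : p' = (1/2 : ℝ) • s' + w' := by rw [hw'_def, hs'_def]; module
  have hqw' : q' = (1/2 : ℝ) • s' - w' := by rw [hw'_def, hs'_def]; module
  have hww' : ⟪w', w'⟫ = ⟪s', s'⟫ / 4 := by
    rw [hw'_def, hs'_def]
    simp only [inner_sub_left, inner_sub_right, inner_add_left, inner_add_right,
      real_inner_smul_left, real_inner_smul_right]
    linarith [hpq', icomm q' p']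
  have hwpar' : ∀ l : ℝ, w' ≠ l • s' := by
    intro l hl
    have hp_eq : p' = (l + 1/2) • s' := by rw [hpw', hl]; module
    have hq_eq : q' = (1/2 - l) • s' := by rw [hqw', hl]; module
    have hz : (0:ℝ) = (l + 1/2) * ((1/2 - l) * ⟪s', s'⟫) := by
      rw [← hpq', hp_eq, hq_eq, real_inner_smul_left, real_inner_smul_right]
    rcases mul_eq_zero.mp hz.symm with h | h
    · rw [h, zero_smul] at hp_eq
      exact hp' hp_eq
    · rcases mul_eq_zero.mp h with h' | h'
      · rw [h', zero_smul] at hq_eq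
        exact hq' hq_eq
      · exact (ne_of_gt hs's') h'
  -- the connecting vector r
  set a1 : P3 := s - (⟪s', s⟫ / ⟪s', s'⟫) • s' with ha1_def
  have hs'a1 : ⟪s', a1⟫ = 0 := by
    rw [ha1_def, inner_sub_right, real_inner_smul_right,
      div_mul_cancel₀ _ (ne_of_gt hs's'), sub_self]
  have hsplit1 : s = a1 + (⟪s', s⟫ / ⟪s', s'⟫) • s' := by rw [ha1_def]; abel
  have hsa1 : ⟪s, a1⟫ = ⟪a1, a1⟫ := by
    calc ⟪s, a1⟫ = ⟪a1 + (⟪s', s⟫ / ⟪s', s'⟫) • s', a1⟫ := by rw [← hsplit1]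
      _ = ⟪a1, a1⟫ + (⟪s', s⟫ / ⟪s', s'⟫) * ⟪s', a1⟫ := by
          rw [inner_add_left, real_inner_smul_left]
      _ = ⟪a1, a1⟫ := by rw [hs'a1]; ring
  have ha1 : a1 ≠ 0 := by
    intro h
    have hs_eq : s = (⟪s', s⟫ / ⟪s', s'⟫) • s' := by
      rw [h, zero_add] at hsplit1
      exact hsplit1
    have hco : (⟪s', s⟫ / ⟪s', s'⟫) ≠ 0 := by
      intro h0
      rw [h0, zero_smul] at hs_eq
      exact hs hs_eq
    exact hind (⟪s', s⟫ / ⟪s', s'⟫)⁻¹ (by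
      have h2 : (⟪s', s⟫ / ⟪s', s'⟫)⁻¹ • s
          = (⟪s', s⟫ / ⟪s', s'⟫)⁻¹ • ((⟪s', s⟫ / ⟪s', s'⟫) • s') := by rw [← hs_eq]
      rw [smul_smul, inv_mul_cancel₀ hco, one_smul] at h2
      exact h2.symm)
  set a2 : P3 := s' - (⟪s, s'⟫ / ⟪s, s⟫) • s with ha2_def
  have hsa2 : ⟪s, a2⟫ = 0 := by
    rw [ha2_def, inner_sub_right, real_inner_smul_right,
      div_mul_cancel₀ _ (ne_of_gt hss), sub_self]
  have hsplit2 : s' = a2 + (⟪s, s'⟫ / ⟪s, s⟫) • s := by rw [ha2_def]; abel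
  have hs'a2 : ⟪s', a2⟫ = ⟪a2, a2⟫ := by
    calc ⟪s', a2⟫ = ⟪a2 + (⟪s, s'⟫ / ⟪s, s⟫) • s, a2⟫ := by rw [← hsplit2]
      _ = ⟪a2, a2⟫ + (⟪s, s'⟫ / ⟪s, s⟫) * ⟪s, a2⟫ := by
          rw [inner_add_left, real_inner_smul_left]
      _ = ⟪a2, a2⟫ := by rw [hsa2]; ring
  have ha2 : a2 ≠ 0 := by
    intro h
    have hs_eq : s' = (⟪s, s'⟫ / ⟪s, s⟫) • s := by
      rw [h, zero_add] at hsplit2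
      exact hsplit2
    exact hind _ hs_eq
  have ha1a1 : (0:ℝ) < ⟪a1, a1⟫ := ipos a1 ha1
  have ha2a2 : (0:ℝ) < ⟪a2, a2⟫ := ipos a2 ha2
  set r : P3 := (2 * c / ⟪a1, a1⟫) • a1 + (2 * c / ⟪a2, a2⟫) • a2 with hr_def
  have hsr : ⟪s, r⟫ = 2 * c := by
    rw [hr_def, inner_add_right, real_inner_smul_right, real_inner_smul_right,
      hsa1, hsa2, div_mul_cancel₀ _ (ne_of_gt ha1a1)]
    ring
  have hs'r : ⟪s', r⟫ = 2 * c := by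
    rw [hr_def, inner_add_right, real_inner_smul_right, real_inner_smul_right,
      hs'a1, hs'a2, div_mul_cancel₀ _ (ne_of_gt ha2a2)]
    ring
  have hr0 : r ≠ 0 := by
    intro h
    rw [h, inner_zero_right] at hsr
    exact hc (by linarith)
  have hrr : (0:ℝ) < ⟪r, r⟫ := ipos r hr0
  -- first side
  obtain ⟨u1, hu10, hsu1, hru1⟩ := exists_orth s r
  have hu1u1 : (0:ℝ) < ⟪u1, u1⟫ := ipos u1 hu10
  have hq1 : (0:ℝ) ≤ ⟪s, s⟫ / (4 * ⟪u1, u1⟫) :=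
    div_nonneg real_inner_self_nonneg (by linarith)
  set w1 : P3 := Real.sqrt (⟪s, s⟫ / (4 * ⟪u1, u1⟫)) • u1 with hw1_def
  have hw1w1 : ⟪w1, w1⟫ = ⟪s, s⟫ / 4 := by
    rw [hw1_def, sqinner, Real.mul_self_sqrt hq1]
    exact harith _ _ (ne_of_gt hu1u1)
  have hsw1 : ⟪s, w1⟫ = 0 := by rw [hw1_def, real_inner_smul_right, hsu1]; ring
  have hrw1 : ⟪r, w1⟫ = 0 := by rw [hw1_def, real_inner_smul_right, hru1]; ring
  have hw10 : w1 ≠ 0 := by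
    intro h
    rw [h, inner_zero_left] at hw1w1
    have : ⟪s, s⟫ = 0 := by linarith
    exact (ne_of_gt hss) this
  have hw1par : ∀ l : ℝ, w1 ≠ l • s := by
    intro l hl
    rw [hl, real_inner_smul_right] at hsw1
    rcases mul_eq_zero.mp hsw1 with h | h
    · rw [h, zero_smul] at hl
      exact hw10 hl
    · exact (ne_of_gt hss) h
  have step1 : A G p q = A G ((1/2 : ℝ) • s + w1) ((1/2 : ℝ) • s - w1) := by
    rw [hpw, hqw]
    exact WD hG s w w1 hs hww hw1w1 hwpar hw1par
  -- splitting vector for r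
  have hq0 : (0:ℝ) ≤ ⟪r, r⟫ / (4 * ⟪u1, u1⟫) :=
    div_nonneg real_inner_self_nonneg (by linarith)
  set w0 : P3 := Real.sqrt (⟪r, r⟫ / (4 * ⟪u1, u1⟫)) • u1 with hw0_def
  have hw0w0 : ⟪w0, w0⟫ = ⟪r, r⟫ / 4 := by
    rw [hw0_def, sqinner, Real.mul_self_sqrt hq0]
    exact harith _ _ (ne_of_gt hu1u1)
  have hsw0 : ⟪s, w0⟫ = 0 := by rw [hw0_def, real_inner_smul_right, hsu1]; ring
  have hrw0 : ⟪r, w0⟫ = 0 := by rw [hw0_def, real_inner_smul_right, hru1]; ring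
  have hw00 : w0 ≠ 0 := by
    intro h
    rw [h, inner_zero_left] at hw0w0
    have : ⟪r, r⟫ = 0 := by linarith
    exact (ne_of_gt hrr) this
  set r1 : P3 := (1/2 : ℝ) • r + w0 with hr1_def
  set r2 : P3 := (1/2 : ℝ) • r - w0 with hr2_def
  have hrsum : r1 + r2 = r := by rw [hr1_def, hr2_def]; module
  have hr1r2 : ⟪r1, r2⟫ = 0 := by
    rw [hr1_def, hr2_def]
    simp only [inner_add_left, inner_sub_right, real_inner_smul_left,
      real_inner_smul_right]
    rw [icomm w0 r, hw0w0, hrw0]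
    ring
  have hsr1 : ⟪s, r1⟫ = c := by
    rw [hr1_def, inner_add_right, real_inner_smul_right, hsr, hsw0]
    ring
  have hsr2 : ⟪s, r2⟫ = c := by
    rw [hr2_def, inner_sub_right, real_inner_smul_right, hsr, hsw0]
    ring
  have step2 : A G ((1/2 : ℝ) • s + w1) ((1/2 : ℝ) • s - w1) = A G r1 r2 := by
    have hsum : ((1/2 : ℝ) • s + w1) + ((1/2 : ℝ) • s - w1) = s := by module
    apply L1 hG _ _ _ _ ?_ (by rw [hsum]; exact hsr1) (by rw [hsum]; exact hsr2)
      hr1r2 ?_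
    · simp only [inner_add_left, inner_sub_right, real_inner_smul_left,
        real_inner_smul_right]
      rw [icomm w1 s, hsw1, hw1w1]
      ring
    · rw [hrsum, inner_add_left, real_inner_smul_left, hsr, icomm w1 r, hrw1]
      ring
  -- second side
  obtain ⟨u2, hu20, hs'u2, hru2⟩ := exists_orth s' r
  have hu2u2 : (0:ℝ) < ⟪u2, u2⟫ := ipos u2 hu20
  have hq2 : (0:ℝ) ≤ ⟪s', s'⟫ / (4 * ⟪u2, u2⟫) :=
    div_nonneg real_inner_self_nonneg (by linarith)
  set w2 : P3 := Real.sqrt (⟪s', s'⟫ / (4 * ⟪u2, u2⟫)) • u2 with hw2_def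
  have hw2w2 : ⟪w2, w2⟫ = ⟪s', s'⟫ / 4 := by
    rw [hw2_def, sqinner, Real.mul_self_sqrt hq2]
    exact harith _ _ (ne_of_gt hu2u2)
  have hs'w2 : ⟪s', w2⟫ = 0 := by rw [hw2_def, real_inner_smul_right, hs'u2]; ring
  have hrw2 : ⟪r, w2⟫ = 0 := by rw [hw2_def, real_inner_smul_right, hru2]; ring
  have hw20 : w2 ≠ 0 := by
    intro h
    rw [h, inner_zero_left] at hw2w2
    have : ⟪s', s'⟫ = 0 := by linarith
    exact (ne_of_gt hs's') this
  have hw2par : ∀ l : ℝ, w2 ≠ l • s' := by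
    intro l hl
    rw [hl, real_inner_smul_right] at hs'w2
    rcases mul_eq_zero.mp hs'w2 with h | h
    · rw [h, zero_smul] at hl
      exact hw20 hl
    · exact (ne_of_gt hs's') h
  have step1' : A G p' q' = A G ((1/2 : ℝ) • s' + w2) ((1/2 : ℝ) • s' - w2) := by
    rw [hpw', hqw']
    exact WD hG s' w' w2 hs' hww' hw2w2 hwpar' hw2par
  have hq0' : (0:ℝ) ≤ ⟪r, r⟫ / (4 * ⟪u2, u2⟫) :=
    div_nonneg real_inner_self_nonneg (by linarith)
  set w0' : P3 := Real.sqrt (⟪r, r⟫ / (4 * ⟪u2, u2⟫)) • u2 with hw0'_def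
  have hw0'w0' : ⟪w0', w0'⟫ = ⟪r, r⟫ / 4 := by
    rw [hw0'_def, sqinner, Real.mul_self_sqrt hq0']
    exact harith _ _ (ne_of_gt hu2u2)
  have hs'w0' : ⟪s', w0'⟫ = 0 := by rw [hw0'_def, real_inner_smul_right, hs'u2]; ring
  have hrw0' : ⟪r, w0'⟫ = 0 := by rw [hw0'_def, real_inner_smul_right, hru2]; ring
  have hw00' : w0' ≠ 0 := by
    intro h
    rw [h, inner_zero_left] at hw0'w0'
    have : ⟪r, r⟫ = 0 := by linarith
    exact (ne_of_gt hrr) this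
  set r1' : P3 := (1/2 : ℝ) • r + w0' with hr1'_def
  set r2' : P3 := (1/2 : ℝ) • r - w0' with hr2'_def
  have hrsum' : r1' + r2' = r := by rw [hr1'_def, hr2'_def]; module
  have hr1r2' : ⟪r1', r2'⟫ = 0 := by
    rw [hr1'_def, hr2'_def]
    simp only [inner_add_left, inner_sub_right, real_inner_smul_left,
      real_inner_smul_right]
    rw [icomm w0' r, hw0'w0', hrw0']
    ring
  have hs'r1' : ⟪s', r1'⟫ = c := by
    rw [hr1'_def, inner_add_right, real_inner_smul_right, hs'r, hs'w0']
    ring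
  have hs'r2' : ⟪s', r2'⟫ = c := by
    rw [hr2'_def, inner_sub_right, real_inner_smul_right, hs'r, hs'w0']
    ring
  have step2' : A G ((1/2 : ℝ) • s' + w2) ((1/2 : ℝ) • s' - w2) = A G r1' r2' := by
    have hsum : ((1/2 : ℝ) • s' + w2) + ((1/2 : ℝ) • s' - w2) = s' := by module
    apply L1 hG _ _ _ _ ?_ (by rw [hsum]; exact hs'r1') (by rw [hsum]; exact hs'r2')
      hr1r2' ?_
    · simp only [inner_add_left, inner_sub_right, real_inner_smul_left,
        real_inner_smul_right]
      rw [icomm w2 s', hs'w2, hw2w2]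
      ring
    · rw [hrsum', inner_add_left, real_inner_smul_left, hs'r, icomm w2 r, hrw2]
      ring
  -- bridge
  have hw0par : ∀ l : ℝ, w0 ≠ l • r := by
    intro l hl
    rw [hl, real_inner_smul_right] at hrw0
    rcases mul_eq_zero.mp hrw0 with h | h
    · rw [h, zero_smul] at hl
      exact hw00 hl
    · exact (ne_of_gt hrr) h
  have hw0'par : ∀ l : ℝ, w0' ≠ l • r := by
    intro l hl
    rw [hl, real_inner_smul_right] at hrw0'
    rcases mul_eq_zero.mp hrw0' with h | h
    · rw [h, zero_smul] at hl
      exact hw00' hl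
    · exact (ne_of_gt hrr) h
  have bridge : A G r1 r2 = A G r1' r2' := by
    rw [hr1_def, hr2_def, hr1'_def, hr2'_def]
    exact WD hG r w0 w0' hr0 hw0w0 hw0'w0' hw0par hw0'par
  rw [step1, step2, bridge, ← step2', ← step1']

lemma orth_const (hc : c ≠ 0)
    (hG : ∀ p q : P3, ⟪p, q⟫ = c → G (p + q) = G p + G q)
    (p q p' q' : P3) (hp : p ≠ 0) (hq : q ≠ 0) (hp' : p' ≠ 0) (hq' : q' ≠ 0)
    (hpq : ⟪p, q⟫ = 0) (hpq' : ⟪p', q'⟫ = 0) :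
    A G p q = A G p' q' := by
  by_cases hind : ∀ l : ℝ, p' + q' ≠ l • (p + q)
  · exact main1 hc hG p q p' q' hp hq hp' hq' hpq hpq' hind
  · push_neg at hind
    obtain ⟨l, hl⟩ := hind
    have hss : (0:ℝ) < ⟪p + q, p + q⟫ := sum_inner_pos p q hp hq hpq
    have hs's' : (0:ℝ) < ⟪p' + q', p' + q'⟫ := sum_inner_pos p' q' hp' hq' hpq'
    have hs' : p' + q' ≠ 0 := by
      intro h
      rw [h, inner_zero_left] at hs's'
      exact lt_irrefl 0 hs's'
    obtain ⟨n, hn0, hsn, -⟩ := exists_orth (p + q) (p + q)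
    obtain ⟨wu, hwu0, hnwu, -⟩ := exists_orth n n
    have hnn : (0:ℝ) < ⟪n, n⟫ := ipos n hn0
    have hwuwu : (0:ℝ) < ⟪wu, wu⟫ := ipos wu hwu0
    have hqn : (0:ℝ) ≤ ⟪n, n⟫ / (4 * ⟪wu, wu⟫) :=
      div_nonneg real_inner_self_nonneg (by linarith)
    set u : P3 := Real.sqrt (⟪n, n⟫ / (4 * ⟪wu, wu⟫)) • wu with hu_def
    have huu : ⟪u, u⟫ = ⟪n, n⟫ / 4 := by
      rw [hu_def, sqinner, Real.mul_self_sqrt hqn]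
      exact harith _ _ (ne_of_gt hwuwu)
    have hnu : ⟪n, u⟫ = 0 := by rw [hu_def, real_inner_smul_right, hnwu]; ring
    set p2 : P3 := (1/2 : ℝ) • n + u with hp2_def
    set q2 : P3 := (1/2 : ℝ) • n - u with hq2_def
    have hsum2 : p2 + q2 = n := by rw [hp2_def, hq2_def]; module
    have hp2q2 : ⟪p2, q2⟫ = 0 := by
      rw [hp2_def, hq2_def]
      simp only [inner_add_left, inner_sub_right, real_inner_smul_left,
        real_inner_smul_right]
      rw [icomm u n, hnu, huu]
      ring
    have hnp2 : ⟪n, p2⟫ = ⟪n, n⟫ / 2 := by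
      rw [hp2_def, inner_add_right, real_inner_smul_right, hnu]
      ring
    have hnq2 : ⟪n, q2⟫ = ⟪n, n⟫ / 2 := by
      rw [hq2_def, inner_sub_right, real_inner_smul_right, hnu]
      ring
    have hp2 : p2 ≠ 0 := by
      intro h
      rw [h, inner_zero_right] at hnp2
      linarith
    have hq2 : q2 ≠ 0 := by
      intro h
      rw [h, inner_zero_right] at hnq2
      linarith
    have e1 : A G p q = A G p2 q2 := by
      apply main1 hc hG p q p2 q2 hp hq hp2 hq2 hpq hp2q2
      intro l2 hl2
      rw [hsum2] at hl2
      have h0 : ⟪p + q, n⟫ = l2 * ⟪p + q, p + q⟫ := by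
        rw [hl2, real_inner_smul_right]
      rw [hsn] at h0
      rcases mul_eq_zero.mp h0.symm with h | h
      · rw [h, zero_smul] at hl2
        exact hn0 hl2
      · exact (ne_of_gt hss) h
    have e2 : A G p2 q2 = A G p' q' := by
      apply main1 hc hG p2 q2 p' q' hp2 hq2 hp' hq' hp2q2 hpq'
      intro l3 hl3
      rw [hsum2] at hl3
      -- p' + q' = l3 • n and p' + q' = l • (p + q)
      have hl30 : l3 ≠ 0 := by
        intro h
        rw [h, zero_smul] at hl3
        exact hs' hl3
      have hn_eq : n = (l3⁻¹ * l) • (p + q) := by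
        have : l3⁻¹ • (p' + q') = l3⁻¹ • (l3 • n) := by rw [← hl3]
        rw [smul_smul, inv_mul_cancel₀ hl30, one_smul] at this
        rw [← this, hl, smul_smul]
      have h0 : ⟪p + q, n⟫ = (l3⁻¹ * l) * ⟪p + q, p + q⟫ := by
        rw [hn_eq, real_inner_smul_right]
      rw [hsn] at h0
      rcases mul_eq_zero.mp h0.symm with h | h
      · rw [h, zero_smul] at hn_eq
        exact hn0 hn_eq
      · exact (ne_of_gt hss) h
    rw [e1, e2]

end FE

section OA

set_option maxHeartbeats 1000000 in
/-- A continuous orthogonally-additive function on ℝ³ is a quadratic plus linear form. -/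
lemma orth_additive_form (χ : P3 → ℝ) (hcont : Continuous χ)
    (hadd : ∀ p q : P3, ⟪p, q⟫ = 0 → χ (p + q) = χ p + χ q) :
    ∃ (a : ℝ) (b : P3), ∀ x : P3, χ x = a * ⟪x, x⟫ + ⟪b, x⟫ := by
  have hχ0 : χ 0 = 0 := by
    have h := hadd 0 0 (inner_zero_left 0)
    simp at h
    linarith
  set E : P3 → ℝ := fun x => (χ x + χ (-x)) / 2 with hE_def
  set O : P3 → ℝ := fun x => (χ x - χ (-x)) / 2 with hO_def
  have hEcont : Continuous E := ((hcont.add (hcont.comp continuous_neg)).div_const 2)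
  have hOcont : Continuous O := ((hcont.sub (hcont.comp continuous_neg)).div_const 2)
  have hEadd : ∀ p q : P3, ⟪p, q⟫ = 0 → E (p + q) = E p + E q := by
    intro p q h
    have h1 := hadd p q h
    have h2 : χ (-(p + q)) = χ (-p) + χ (-q) := by
      rw [neg_add]
      exact hadd (-p) (-q) (by rw [inner_neg_neg]; exact h)
    simp only [hE_def]
    rw [h1, h2]
    ring
  have hOadd : ∀ p q : P3, ⟪p, q⟫ = 0 → O (p + q) = O p + O q := by
    intro p q h
    have h1 := hadd p q h
    have h2 : χ (-(p + q)) = χ (-p) + χ (-q) := by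
      rw [neg_add]
      exact hadd (-p) (-q) (by rw [inner_neg_neg]; exact h)
    simp only [hO_def]
    rw [h1, h2]
    ring
  have hEeven : ∀ x : P3, E (-x) = E x := by
    intro x
    simp only [hE_def, neg_neg]
    ring
  have hOodd : ∀ x : P3, O (-x) = -O x := by
    intro x
    simp only [hO_def, neg_neg]
    ring
  have hE0 : E 0 = 0 := by simp only [hE_def, neg_zero, hχ0]; ring
  have hO0 : O 0 = 0 := by simp only [hO_def, neg_zero, hχ0]; ring
  -- E is radial
  have hErad : ∀ x y : P3, ⟪x, x⟫ = ⟪y, y⟫ → E x = E y := by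
    intro x y h
    set p : P3 := (1/2 : ℝ) • (x + y) with hp_def
    set q : P3 := (1/2 : ℝ) • (x - y) with hq_def
    have hpq : ⟪p, q⟫ = 0 := by
      rw [hp_def, hq_def, real_inner_smul_left, real_inner_smul_right]
      simp only [inner_add_left, inner_sub_right]
      rw [icomm y x]
      rw [h]
      ring
    have hx : p + q = x := by rw [hp_def, hq_def]; module
    have hy : p + (-q) = y := by rw [hp_def, hq_def]; module
    have h1 : E x = E p + E q := by rw [← hx]; exact hEadd p q hpq
    have h2 : E y = E p + E (-q) := by
      rw [← hy]
      exact hEadd p (-q) (by rw [inner_neg_right, hpq, neg_zero])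
    rw [h1, h2, hEeven]
  -- the radial profile
  set e1 : P3 := EuclideanSpace.single (0 : Fin 3) (1 : ℝ) with he1_def
  set e2 : P3 := EuclideanSpace.single (1 : Fin 3) (1 : ℝ) with he2_def
  have he1e1 : ⟪e1, e1⟫ = 1 := by
    rw [he1_def]
    simp [EuclideanSpace.inner_single_left, EuclideanSpace.single_apply]
  have he2e2 : ⟪e2, e2⟫ = 1 := by
    rw [he2_def]
    simp [EuclideanSpace.inner_single_left, EuclideanSpace.single_apply]
  have he1e2 : ⟪e1, e2⟫ = 0 := by
    rw [he1_def, he2_def]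
    simp [EuclideanSpace.inner_single_left, EuclideanSpace.single_apply]
  set e : ℝ → ℝ := fun t => E (Real.sqrt t • e1) with he_def
  have hsqrt_inner : ∀ (t : ℝ) (u : P3), 0 ≤ t → ⟪u, u⟫ = 1 →
      ⟪Real.sqrt t • u, Real.sqrt t • u⟫ = t := by
    intro t u ht hu
    rw [sqinner, Real.mul_self_sqrt ht, hu, mul_one]
  have hEe : ∀ x : P3, E x = e ⟪x, x⟫ := by
    intro x
    rw [he_def]
    exact hErad x _ (hsqrt_inner _ _ real_inner_self_nonneg he1e1).symm
  have hecont : Continuous e := by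
    apply hEcont.comp
    exact Real.continuous_sqrt.smul continuous_const
  have headd : ∀ t s : ℝ, 0 ≤ t → 0 ≤ s → e (t + s) = e t + e s := by
    intro t s ht hs
    have hort : ⟪Real.sqrt t • e1, Real.sqrt s • e2⟫ = 0 := by
      rw [real_inner_smul_left, real_inner_smul_right, he1e2]
      ring
    have h1 : E (Real.sqrt t • e1 + Real.sqrt s • e2)
        = E (Real.sqrt t • e1) + E (Real.sqrt s • e2) := hEadd _ _ hort
    have h2 : E (Real.sqrt s • e2) = e s := by
      rw [he_def]
      exact hErad _ _ (by
        rw [hsqrt_inner _ _ hs he2e2, hsqrt_inner _ _ hs he1e1])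
    have h3 : E (Real.sqrt t • e1 + Real.sqrt s • e2) = e (t + s) := by
      rw [he_def]
      apply hErad
      rw [inner_sum_self, hort, hsqrt_inner _ _ ht he1e1, hsqrt_inner _ _ hs he2e2,
        hsqrt_inner _ _ (by linarith : (0:ℝ) ≤ t + s) he1e1]
      ring
    rw [← h3, h1, h2, he_def]
  have hEquad : ∀ x : P3, E x = e 1 * ⟪x, x⟫ := by
    intro x
    rw [hEe x, half_additive_linear e hecont headd _ real_inner_self_nonneg]
    ring
  -- the odd part
  have hEN : ∀ u v : P3, ⟪u, u⟫ = ⟪v, v⟫ →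
      O u + O v = 2 * O ((1/2 : ℝ) • (u + v)) := by
    intro u v h
    set p : P3 := (1/2 : ℝ) • (u + v) with hp_def
    set q : P3 := (1/2 : ℝ) • (u - v) with hq_def
    have hpq : ⟪p, q⟫ = 0 := by
      rw [hp_def, hq_def, real_inner_smul_left, real_inner_smul_right]
      simp only [inner_add_left, inner_sub_right]
      rw [icomm v u]
      rw [h]
      ring
    have hu : p + q = u := by rw [hp_def, hq_def]; module
    have hv : p + (-q) = v := by rw [hp_def, hq_def]; module
    have h1 : O u = O p + O q := by rw [← hu]; exact hOadd p q hpq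
    have h2 : O v = O p + O (-q) := by
      rw [← hv]
      exact hOadd p (-q) (by rw [inner_neg_right, hpq, neg_zero])
    rw [h1, h2, hOodd]
    ring
  have hO2 : ∀ x : P3, O ((2:ℝ) • x) = 2 * O x := by
    intro x
    by_cases hx : x = 0
    · rw [hx, smul_zero, hO0]
      ring
    obtain ⟨n, hn0, hxn, -⟩ := exists_orth x x
    have hnn : (0:ℝ) < ⟪n, n⟫ := ipos n hn0
    have hqn : (0:ℝ) ≤ ⟪x, x⟫ / ⟪n, n⟫ :=
      div_nonneg real_inner_self_nonneg (le_of_lt hnn)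
    set q : P3 := Real.sqrt (⟪x, x⟫ / ⟪n, n⟫) • n with hq_def
    have hqq : ⟪q, q⟫ = ⟪x, x⟫ := by
      rw [hq_def, sqinner, Real.mul_self_sqrt hqn, div_mul_cancel₀ _ (ne_of_gt hnn)]
    have hxq : ⟪x, q⟫ = 0 := by rw [hq_def, real_inner_smul_right, hxn]; ring
    have h1 := hEN ((2:ℝ) • x) ((2:ℝ) • q)
      (by rw [sqinner (2:ℝ) x, sqinner (2:ℝ) q, hqq])
    have h2 := hEN ((2:ℝ) • x) ((-2:ℝ) • q) (by
      rw [sqinner (2:ℝ) x, sqinner (-2:ℝ) q, hqq]; ring)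
    have hv1 : (1/2 : ℝ) • ((2:ℝ) • x + (2:ℝ) • q) = x + q := by module
    have hv2 : (1/2 : ℝ) • ((2:ℝ) • x + (-2:ℝ) • q) = x + (-q) := by module
    rw [hv1] at h1
    rw [hv2] at h2
    have h3 : O (x + q) = O x + O q := hOadd x q hxq
    have h4 : O (x + (-q)) = O x + O (-q) :=
      hOadd x (-q) (by rw [inner_neg_right, hxq, neg_zero])
    have h5 : O ((-2:ℝ) • q) = -O ((2:ℝ) • q) := by
      rw [show ((-2:ℝ) • q) = -((2:ℝ) • q) by module, hOodd]
    rw [h3] at h1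
    rw [h4, hOodd, h5] at h2
    linarith
  have hENadd : ∀ u v : P3, ⟪u, u⟫ = ⟪v, v⟫ → O (u + v) = O u + O v := by
    intro u v h
    have h1 := hEN u v h
    have hv2 : (2:ℝ) • ((1/2 : ℝ) • (u + v)) = u + v := by module
    have h2 : O (u + v) = 2 * O ((1/2 : ℝ) • (u + v)) := by
      calc O (u + v) = O ((2:ℝ) • ((1/2 : ℝ) • (u + v))) := by rw [hv2]
        _ = 2 * O ((1/2 : ℝ) • (u + v)) := hO2 _
    linarith
  -- collinear additivity
  have hOcol' : ∀ (v : P3) (α γ : ℝ), α^2 ≤ γ^2 →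
      O ((α + γ) • v) = O (α • v) + O (γ • v) := by
    intro v α γ hle
    obtain ⟨w, hw0, hvw, -⟩ := exists_orth v v
    have hww : (0:ℝ) < ⟪w, w⟫ := ipos w hw0
    have hqw : (0:ℝ) ≤ ⟪v, v⟫ / ⟪w, w⟫ :=
      div_nonneg real_inner_self_nonneg (le_of_lt hww)
    set w' : P3 := Real.sqrt (⟪v, v⟫ / ⟪w, w⟫) • w with hw'_def
    have hw'w' : ⟪w', w'⟫ = ⟪v, v⟫ := by
      rw [hw'_def, sqinner, Real.mul_self_sqrt hqw, div_mul_cancel₀ _ (ne_of_gt hww)]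
    have hvw' : ⟪v, w'⟫ = 0 := by rw [hw'_def, real_inner_smul_right, hvw]; ring
    set β : ℝ := Real.sqrt (γ^2 - α^2) with hβ_def
    have hβ2 : β^2 = γ^2 - α^2 := by
      rw [hβ_def, Real.sq_sqrt (by linarith)]
    have hxy : ⟪α • v + β • w', α • v + β • w'⟫ = ⟪γ • v, γ • v⟫ := by
      rw [inner_sum_self, sqinner α v, sqinner β w', sqinner γ v, hw'w']
      have hc : ⟪α • v, β • w'⟫ = 0 := by
        rw [real_inner_smul_left, real_inner_smul_right, hvw']
        ring
      rw [hc]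
      linear_combination (⟪v, v⟫ : ℝ) * hβ2
    have happ := hENadd (α • v + β • w') (γ • v) hxy
    have hveq : (α • v + β • w') + γ • v = (α + γ) • v + β • w' := by module
    rw [hveq] at happ
    have ho1 : O ((α + γ) • v + β • w') = O ((α + γ) • v) + O (β • w') := by
      apply hOadd
      rw [real_inner_smul_left, real_inner_smul_right, hvw']
      ring
    have ho2 : O (α • v + β • w') = O (α • v) + O (β • w') := by
      apply hOadd
      rw [real_inner_smul_left, real_inner_smul_right, hvw']
      ring
    rw [ho1, ho2] at happ
    linarith
  have hOcol : ∀ (v : P3) (α γ : ℝ), O ((α + γ) • v) = O (α • v) + O (γ • v) := by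
    intro v α γ
    by_cases hle : α^2 ≤ γ^2
    · exact hOcol' v α γ hle
    · have h := hOcol' v γ α (by nlinarith)
      rw [add_comm γ α] at h
      linarith
  -- full additivity
  have hOfull : ∀ x y : P3, O (x + y) = O x + O y := by
    intro x y
    by_cases hy : y = 0
    · rw [hy, add_zero, hO0]
      ring
    have hyy : (0:ℝ) < ⟪y, y⟫ := ipos y hy
    set μ : ℝ := ⟪y, x⟫ / ⟪y, y⟫ with hμ_def
    set xp : P3 := x - μ • y with hxp_def
    have hperp : ⟪y, xp⟫ = 0 := by
      rw [hxp_def, inner_sub_right, real_inner_smul_right, hμ_def,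
        div_mul_cancel₀ _ (ne_of_gt hyy), sub_self]
    have h1 : O (x + y) = O ((μ + 1) • y) + O xp := by
      rw [show x + y = (μ + 1) • y + xp by rw [hxp_def]; module]
      apply hOadd
      rw [real_inner_smul_left, hperp]
      ring
    have h2 : O ((μ + 1) • y) = O (μ • y) + O ((1:ℝ) • y) := hOcol y μ 1
    have h3 : O x = O (μ • y) + O xp := by
      rw [show x = μ • y + xp by rw [hxp_def]; module]
      apply hOadd
      rw [real_inner_smul_left, hperp]
      ring
    rw [h1, h2, h3, one_smul]
    ring
  have hOlin : ∀ (t : ℝ) (x : P3), O (t • x) = t * O x := by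
    intro t x
    have hc : Continuous (fun t : ℝ => O (t • x)) :=
      hOcont.comp (continuous_id.smul continuous_const)
    have hadd' : ∀ a b : ℝ, O ((a + b) • x) = O (a • x) + O (b • x) := by
      intro a b
      rw [add_smul]
      exact hOfull _ _
    have := additive_cont_linear (fun t : ℝ => O (t • x)) hc hadd' t
    simpa using this
  -- assemble the linear part
  set b : P3 := ∑ i : Fin 3, O (EuclideanSpace.single i (1:ℝ)) •
    EuclideanSpace.single i (1:ℝ) with hb_def
  have hdecomp : ∀ x : P3, x = ∑ i : Fin 3, x i • EuclideanSpace.single i (1:ℝ) := by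
    intro x
    ext j
    symm
    have hap : (∑ i : Fin 3, x i • EuclideanSpace.single i (1:ℝ)) j
        = ∑ i : Fin 3, (x i • EuclideanSpace.single i (1:ℝ)) j :=
      by rw [WithLp.ofLp_sum]; exact Finset.sum_apply j Finset.univ _
    rw [hap]
    simp [EuclideanSpace.single_apply]
  have hOsum : ∀ x : P3, O x = ∑ i : Fin 3, x i * O (EuclideanSpace.single i (1:ℝ)) := by
    intro x
    have key : ∀ s : Finset (Fin 3),
        O (∑ i ∈ s, x i • EuclideanSpace.single i (1:ℝ))
          = ∑ i ∈ s, x i * O (EuclideanSpace.single i (1:ℝ)) := by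
      intro s
      induction s using Finset.induction with
      | empty => simpa using hO0
      | insert _ _ hnotmem ih =>
        rw [Finset.sum_insert hnotmem, Finset.sum_insert hnotmem, hOfull, hOlin, ih]
    calc O x = O (∑ i : Fin 3, x i • EuclideanSpace.single i (1:ℝ)) := by
          rw [← hdecomp x]
      _ = _ := key Finset.univ
  have hbx : ∀ x : P3, ⟪b, x⟫ = ∑ i : Fin 3, x i * O (EuclideanSpace.single i (1:ℝ)) := by
    intro x
    rw [hb_def, sum_inner]
    apply Finset.sum_congr rfl
    intro i _
    rw [real_inner_smul_left, EuclideanSpace.inner_single_left]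
    simp
    try ring
  refine ⟨e 1, b, fun x => ?_⟩
  have hsplit : χ x = E x + O x := by
    simp only [hE_def, hO_def]
    ring
  rw [hsplit, hEquad, hOsum, hbx]

end OA

section Final

set_option maxHeartbeats 1000000 in
/-- Any continuous solution of the constrained additivity equation has the
quadratic-plus-linear form. -/
lemma constraint_form (c : ℝ) (hc : 0 < c) (G : P3 → ℝ) (hGcont : Continuous G)
    (hG : ∀ p q : P3, ⟪p, q⟫ = c → G (p + q) = G p + G q) :
    ∃ (a : ℝ) (b : P3), ∀ x : P3, G x = a * ⟪x, x⟫ + ⟪b, x⟫ + 2 * a * c := by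
  have hc' : c ≠ 0 := ne_of_gt hc
  set e1 : P3 := EuclideanSpace.single (0 : Fin 3) (1 : ℝ) with he1_def
  set e2 : P3 := EuclideanSpace.single (1 : Fin 3) (1 : ℝ) with he2_def
  have he1e1 : ⟪e1, e1⟫ = 1 := by
    rw [he1_def]
    simp [EuclideanSpace.inner_single_left, EuclideanSpace.single_apply]
  have he2e2 : ⟪e2, e2⟫ = 1 := by
    rw [he2_def]
    simp [EuclideanSpace.inner_single_left, EuclideanSpace.single_apply]
  have he1e2 : ⟪e1, e2⟫ = 0 := by
    rw [he1_def, he2_def]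
    simp [EuclideanSpace.inner_single_left, EuclideanSpace.single_apply]
  have he1 : e1 ≠ 0 := by
    intro h
    rw [h, inner_zero_left] at he1e1
    exact zero_ne_one he1e1
  have he2 : e2 ≠ 0 := by
    intro h
    rw [h, inner_zero_left] at he2e2
    exact zero_ne_one he2e2
  -- the constant defect on orthogonal pairs
  have hK : ∀ p q : P3, p ≠ 0 → q ≠ 0 → ⟪p, q⟫ = 0 → A G p q = A G e1 e2 :=
    fun p q hp hq hpq => orth_const hc' hG p q e1 e2 hp hq he1 he2 hpq he1e2
  -- identify the constant via continuity
  have hlim : A G e1 e2 = -G 0 := by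
    set sq : ℕ → P3 := fun n => (1 / ((n : ℝ) + 1)) • e2 with hsq_def
    have hsq0 : ∀ n : ℕ, sq n ≠ 0 := by
      intro n
      apply smul_ne_zero _ he2
      positivity
    have hsqorth : ∀ n : ℕ, ⟪e1, sq n⟫ = 0 := by
      intro n
      rw [hsq_def, real_inner_smul_right, he1e2]
      ring
    have htend : Filter.Tendsto sq Filter.atTop (nhds 0) := by
      have h1 : Filter.Tendsto (fun n : ℕ => 1 / ((n : ℝ) + 1)) Filter.atTop (nhds 0) :=
        tendsto_one_div_add_atTop_nhds_zero_nat
      have h2 := h1.smul_const e2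
      rw [zero_smul] at h2
      exact h2
    set Φ : P3 → ℝ := fun q => G (e1 + q) - G e1 - G q with hΦ_def
    have hΦcont : Continuous Φ :=
      ((hGcont.comp (continuous_const.add continuous_id)).sub continuous_const).sub
        hGcont
    have hΦ0 : Φ 0 = -G 0 := by
      rw [hΦ_def]
      simp
    have ht1 : Filter.Tendsto (fun n => Φ (sq n)) Filter.atTop (nhds (-G 0)) := by
      rw [← hΦ0]
      exact (hΦcont.continuousAt.tendsto).comp htend
    have ht2 : Filter.Tendsto (fun n => Φ (sq n)) Filter.atTop (nhds (A G e1 e2)) := by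
      have hconst : ∀ n : ℕ, Φ (sq n) = A G e1 e2 := by
        intro n
        have := hK e1 (sq n) he1 (hsq0 n) (hsqorth n)
        rw [← this]
        rfl
      rw [show (fun n => Φ (sq n)) = fun _ : ℕ => A G e1 e2 from funext hconst]
      exact tendsto_const_nhds
    exact tendsto_nhds_unique ht2 ht1
  -- the orthogonally additive part
  set χ : P3 → ℝ := fun x => G x - G 0 with hχ_def
  have hχcont : Continuous χ := hGcont.sub continuous_const
  have hχadd : ∀ p q : P3, ⟪p, q⟫ = 0 → χ (p + q) = χ p + χ q := by
    intro p q hpq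
    by_cases hp : p = 0
    · rw [hp, zero_add, hχ_def]
      simp
    by_cases hq : q = 0
    · rw [hq, add_zero, hχ_def]
      simp
    have h1 : A G p q = -G 0 := by rw [hK p q hp hq hpq, hlim]
    have h2 : G (p + q) - G p - G q = -G 0 := h1
    simp only [hχ_def]
    linarith
  obtain ⟨a, b, hab⟩ := orth_additive_form χ hχcont hχadd
  have hGx : ∀ x : P3, G x = a * ⟪x, x⟫ + ⟪b, x⟫ + G 0 := by
    intro x
    have := hab x
    simp only [hχ_def] at this
    linarith
  -- identify G 0
  have hG0 : G 0 = 2 * a * c := by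
    set p : P3 := Real.sqrt c • e1 with hp_def
    have hpp : ⟪p, p⟫ = c := by
      rw [hp_def, sqinner, Real.mul_self_sqrt (le_of_lt hc), he1e1, mul_one]
    have h1 : G (p + p) = G p + G p := hG p p hpp
    have h2 : G (p + p) = a * (4 * c) + 2 * ⟪b, p⟫ + G 0 := by
      rw [hGx (p + p), inner_sum_self, hpp, inner_add_right]
      ring
    have h3 : G p = a * c + ⟪b, p⟫ + G 0 := by
      rw [hGx p, hpp]
    rw [h2, h3] at h1
    linarith
  exact ⟨a, b, fun x => by rw [hGx x, hG0]⟩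

end Final

end PlanckAux

open PlanckAux in
set_option maxHeartbeats 1000000 in
/-- a positive function satisfying the equilibrium functional equation
is a Planckian. -/
theorem equilibrium_is_planckian
    (m g nc : ℝ) (hm : 0 < m) (hg : 0 < g) (hnc : 0 < nc)
    (f : P3 → ℝ) (hpos : ∀ p, 0 < f p) (hcont : Continuous f)
    (heq : ∀ p1 p2 p3 : P3, p1 = p2 + p3 →
      ‖p1‖ ^ 2 = ‖p2‖ ^ 2 + ‖p3‖ ^ 2 + 2 * m * g * nc →
      f p1 / (1 + f p1) = (f p2 / (1 + f p2)) * (f p3 / (1 + f p3))) :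
    ∃ α : ℝ, 0 < α ∧ ∃ β : P3, ∀ p : P3,
      f p / (1 + f p) = Real.exp (-(α * (‖p‖ ^ 2 + 2 * m * g * nc) + (inner ℝ β p : ℝ))) ∧
      f p = 1 / (Real.exp (α * (‖p‖ ^ 2 + 2 * m * g * nc) + (inner ℝ β p : ℝ)) - 1) := by
  have hc : (0:ℝ) < m * g * nc := by positivity
  have hden : ∀ p : P3, (0:ℝ) < 1 + f p := fun p => by linarith [hpos p]
  have hFpos : ∀ p : P3, 0 < f p / (1 + f p) := fun p => div_pos (hpos p) (hden p)
  have hFlt : ∀ p : P3, f p / (1 + f p) < 1 := by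
    intro p
    rw [div_lt_one (hden p)]
    linarith [hpos p]
  set G : P3 → ℝ := fun p => Real.log (f p / (1 + f p)) with hG_def
  have hFcont : Continuous fun p => f p / (1 + f p) :=
    hcont.div (continuous_const.add hcont) fun x => ne_of_gt (hden x)
  have hGcont : Continuous G := by
    rw [hG_def]
    apply continuous_iff_continuousAt.mpr
    intro p
    exact ContinuousAt.comp (g := Real.log) (f := fun q => f q / (1 + f q))
      (Real.continuousAt_log (ne_of_gt (hFpos p))) hFcont.continuousAt
  have hG : ∀ p q : P3, @inner ℝ _ _ p q = m * g * nc → G (p + q) = G p + G q := by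
    intro p q h
    have hnorm : ‖p + q‖ ^ 2 = ‖p‖ ^ 2 + ‖q‖ ^ 2 + 2 * m * g * nc := by
      rw [norm_add_sq_real, h]
      ring
    have hmul := heq (p + q) p q rfl hnorm
    simp only [hG_def]
    rw [hmul, Real.log_mul (ne_of_gt (hFpos p)) (ne_of_gt (hFpos q))]
  obtain ⟨a, b, hab⟩ := constraint_form (m * g * nc) hc G hGcont hG
  have hG0 : G 0 < 0 := Real.log_neg (hFpos 0) (hFlt 0)
  have hG0eq : G 0 = 2 * a * (m * g * nc) := by
    have := hab 0
    simpa using this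
  have ha : a < 0 := by nlinarith
  refine ⟨-a, by linarith, -b, fun p => ?_⟩
  have hGp : G p = a * ‖p‖ ^ 2 + (inner ℝ b p : ℝ) + 2 * a * (m * g * nc) := by
    have := hab p
    rwa [real_inner_self_eq_norm_sq] at this
  have hXeq : -(-a * (‖p‖ ^ 2 + 2 * m * g * nc) + (inner ℝ (-b) p : ℝ)) = G p := by
    rw [hGp, inner_neg_left]
    push_cast
    ring
  have hfirst : f p / (1 + f p)
      = Real.exp (-(-a * (‖p‖ ^ 2 + 2 * m * g * nc) + (inner ℝ (-b) p : ℝ))) := by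
    rw [hXeq, hG_def]
    exact (Real.exp_log (hFpos p)).symm
  refine ⟨hfirst, ?_⟩
  have hfne : f p ≠ 0 := ne_of_gt (hpos p)
  have hdne : (1:ℝ) + f p ≠ 0 := ne_of_gt (hden p)
  set X : ℝ := -a * (‖p‖ ^ 2 + 2 * m * g * nc) + (inner ℝ (-b) p : ℝ) with hX_def
  have hexpX : Real.exp X = (1 + f p) / f p := by
    have h1 : Real.exp (-X) = f p / (1 + f p) := hfirst.symm
    have h2 : Real.exp X = (Real.exp (-X))⁻¹ := by
      rw [← Real.exp_neg, neg_neg]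
    rw [h2, h1, inv_div]
  rw [hexpX]
  have hsub : (1 + f p) / f p - 1 = 1 / f p := by
    field_simp
    ring
  rw [hsub, one_div_one_div]
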